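/- If the block code C contains its Euclidean dual, i.e., C^⊥ ⊆ C, then the convolutional code V is self-orthogonal, V ⊆ V^⊥: for all u(D), w(D) ∈ F[D]^κ, the codewords v(D) = u(D)G(D) and x(D) = w(D)G(D) satisfy ⟨v(D), x(D)⟩ = Σ_t v_t · x_t = 0, where v_t, x_t ∈ F^n denote the coefficient vectors of D^t. -/

import Mathlib

lemma aux_orth {F : Type*} [Field F] {n κ m : ℕ}
    (H : Fin (m + 1) → Matrix (Fin κ) (Fin n) F)
    (orth : ∀ i k r s, ∑ j, H i r j * H k s j = 0)
    (a b : Fin (m + 1) → Fin κ → F) :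
    ∑ j, (∑ i, ∑ r, a i r * H i r j) * (∑ k, ∑ s, b k s * H k s j) = 0 := by
  have : ∀ j, (∑ i, ∑ r, a i r * H i r j) * (∑ k, ∑ s, b k s * H k s j)
      = ∑ i, ∑ r, ∑ k, ∑ s, (a i r * b k s) * (H i r j * H k s j) := by
    intro j
    rw [Finset.sum_mul]
    refine Finset.sum_congr rfl fun i _ => ?_
    rw [Finset.sum_mul]
    refine Finset.sum_congr rfl fun r _ => ?_
    rw [Finset.mul_sum]
    refine Finset.sum_congr rfl fun k _ => ?_
    rw [Finset.mul_sum]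
    refine Finset.sum_congr rfl fun s _ => ?_
    ring
  simp only [this]
  rw [Finset.sum_comm]
  refine Finset.sum_eq_zero fun i _ => ?_
  rw [Finset.sum_comm]
  refine Finset.sum_eq_zero fun r _ => ?_
  rw [Finset.sum_comm]
  refine Finset.sum_eq_zero fun k _ => ?_
  rw [Finset.sum_comm]
  refine Finset.sum_eq_zero fun s _ => ?_
  rw [← Finset.mul_sum, orth, mul_zero]



/-- **Euclidean self-orthogonality of the convolutional code.**
If the block code `C = {v : vᵀ·H̃ᵢᵗ = 0 ∀i}` contains its Euclidean dual,
then the convolutional code `V = {u(D)G(D)}` with `G(D) = ∑ H̃ᵢ Dⁱ`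
satisfies `V ⊆ V^⊥`: any two codewords have vanishing Euclidean inner
product `∑ₜ vₜ · xₜ = 0`. -/
theorem convolutional_code_euclidean_self_orthogonal
    {F : Type*} [Field F] [Fintype F] {n κ m : ℕ} (hn : 0 < n) (hκ : 0 < κ)
    (H : Fin (m + 1) → Matrix (Fin κ) (Fin n) F)
    (hind : LinearIndependent F
      (fun p : {p : Fin (m + 1) × Fin κ // H p.1 p.2 ≠ 0} => H p.1.1 p.1.2))
    (h0 : ∀ j : Fin κ, H 0 j ≠ 0)
    (hdual : ∀ w : Fin n → F,
      (∀ c : Fin n → F, (∀ i, (H i).mulVec c = 0) → dotProduct w c = 0) →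
      (∀ i, (H i).mulVec w = 0))
    (G : Matrix (Fin κ) (Fin n) (Polynomial F))
    (hG : G = ∑ i : Fin (m + 1), (H i).map (fun a => Polynomial.C a * Polynomial.X ^ (i : ℕ)))
    (u w : Fin κ → Polynomial F) :
    ∑ᶠ t : ℕ, ∑ j : Fin n,
      ((Matrix.vecMul u G) j).coeff t * ((Matrix.vecMul w G) j).coeff t = 0 := by
  -- Step 1: rows of H k are in the dual, hence in C: H i * (H k)ᵀ = 0
  have orth : ∀ i k r s, ∑ j, H i r j * H k s j = 0 := by
    intro i k r s
    have hmem : ∀ c : Fin n → F, (∀ i', (H i').mulVec c = 0) →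
        dotProduct (H k s) c = 0 := by
      intro c hc
      have := congrFun (hc k) s
      simpa [Matrix.mulVec, dotProduct] using this
    have := congrFun (hdual (H k s) hmem i) r
    simpa [Matrix.mulVec, dotProduct] using this
  -- Step 2: coefficient formula
  have coeffv : ∀ (v : Fin κ → Polynomial F) (t : ℕ) (j : Fin n),
      ((Matrix.vecMul v G) j).coeff t
        = ∑ i : Fin (m + 1), ∑ r : Fin κ, (if (i : ℕ) ≤ t then (v r).coeff (t - (i : ℕ)) else 0) * H i r j := by
    intro v t j
    have hGrj : ∀ r, G r j = ∑ i, Polynomial.C (H i r j) * Polynomial.X ^ (i : ℕ) := by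
      intro r
      simp [hG, Matrix.sum_apply, Matrix.map_apply]
    have : (Matrix.vecMul v G) j = ∑ r, v r * G r j := by
      simp [Matrix.vecMul, dotProduct]
    rw [this]
    simp only [hGrj, Finset.mul_sum]
    rw [Polynomial.finset_sum_coeff, Finset.sum_comm]
    refine Finset.sum_congr rfl fun r _ => ?_
    rw [Polynomial.finset_sum_coeff]
    refine Finset.sum_congr rfl fun i _ => ?_
    have : v r * (Polynomial.C (H i r j) * Polynomial.X ^ (i : ℕ))
        = Polynomial.C (H i r j) * (v r * Polynomial.X ^ (i : ℕ)) := by ring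
    rw [this, Polynomial.coeff_C_mul, Polynomial.coeff_mul_X_pow']
    split <;> ring
  have key : ∀ t : ℕ, ∑ j : Fin n,
      ((Matrix.vecMul u G) j).coeff t * ((Matrix.vecMul w G) j).coeff t = 0 := by
    intro t
    simp only [coeffv]
    exact aux_orth H orth _ _
  simp only [key]
  exact finsum_zero
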